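/- Let N(m) denote the cardinality of the NP-LOCO code NPC(m). Then (N(m))^{1/m} → (3 + √17)/2 as m → ∞. (Hence the constrained part of the NP-LOCO coding scheme has capacity log₂((3 + √17)/2) ≈ 1.8325 input bits per coded symbol.) -/

import Mathlib

/-- The NP-LOCO code: words of length `m` over the alphabet `{0,1,2,3}`
(position `m-1` most significant) containing no contiguous subword `u 3 v` with
`u, v ∈ {0,1}` and no contiguous subword `u 0 v` with `u, v ∈ {2,3}`. -/
def NPC (m : ℕ) : Set (Fin m → Fin 4) :=
  {c | ∀ i : ℕ, ∀ h : i + 2 < m,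
      ¬((c ⟨i + 2, h⟩ ∈ ({0, 1} : Set (Fin 4)) ∧ c ⟨i + 1, by omega⟩ = 3 ∧
            c ⟨i, by omega⟩ ∈ ({0, 1} : Set (Fin 4))) ∨
        (c ⟨i + 2, h⟩ ∈ ({2, 3} : Set (Fin 4)) ∧ c ⟨i + 1, by omega⟩ = 0 ∧
            c ⟨i, by omega⟩ ∈ ({2, 3} : Set (Fin 4))))}



def Ok (z y x : Fin 4) : Bool :=
  !(((z == 0 || z == 1) && y == 3 && (x == 0 || x == 1)) ||
    ((z == 2 || z == 3) && y == 0 && (x == 2 || x == 3)))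

def Res (y x : Fin 4) : Bool :=
  (y == 3 && (x == 0 || x == 1)) || (y == 0 && (x == 2 || x == 3))

def good {m : ℕ} (c : Fin m → Fin 4) : Prop :=
  ∀ i : ℕ, ∀ h : i + 2 < m,
    Ok (c ⟨i + 2, h⟩) (c ⟨i + 1, by omega⟩) (c ⟨i, by omega⟩) = true

instance {m} : DecidablePred (@good m) := fun c =>
  decidable_of_iff (∀ i : Fin m, ∀ h : (i : ℕ) + 2 < m,
      Ok (c ⟨(i : ℕ) + 2, h⟩) (c ⟨(i : ℕ) + 1, by omega⟩) (c ⟨(i : ℕ), by omega⟩) = true)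
    ⟨fun H i h => H ⟨i, by omega⟩ h, fun H i h => H i h⟩

def G (m : ℕ) : Finset (Fin m → Fin 4) := Finset.univ.filter good

def Ncnt (m : ℕ) : ℕ := (G m).card

lemma snoc_lt {k : ℕ} (w : Fin (k + 2) → Fin 4) (x : Fin 4) (j : ℕ) (hj : j < k + 2)
    (hj' : j < k + 3) : (Fin.snoc w x : Fin (k + 3) → Fin 4) ⟨j, hj'⟩ = w ⟨j, hj⟩ := by
  have : (⟨j, hj'⟩ : Fin (k + 3)) = Fin.castSucc ⟨j, hj⟩ := rfl
  rw [this, Fin.snoc_castSucc]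

lemma snoc_top {k : ℕ} (w : Fin (k + 2) → Fin 4) (x : Fin 4) (hj' : k + 2 < k + 3) :
    (Fin.snoc w x : Fin (k + 3) → Fin 4) ⟨k + 2, hj'⟩ = x := by
  have : (⟨k + 2, hj'⟩ : Fin (k + 3)) = Fin.last (k + 2) := rfl
  rw [this, Fin.snoc_last]

lemma good_init {k : ℕ} (c : Fin (k + 3) → Fin 4) (hc : good c) : good (Fin.init c) := by
  intro i h
  exact hc i (by omega)

lemma good_snoc {k : ℕ} (w : Fin (k + 2) → Fin 4) (x : Fin 4) (hw : good w)
    (hx : Ok x (w ⟨k + 1, by omega⟩) (w ⟨k, by omega⟩) = true) : good (Fin.snoc w x) := by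
  intro i h
  rcases Nat.lt_or_ge (i + 2) (k + 2) with h2 | h2
  · rw [snoc_lt w x _ h2, snoc_lt w x _ (by omega), snoc_lt w x _ (by omega)]
    exact hw i h2
  · have hi : i = k := by omega
    subst hi
    rw [snoc_top, snoc_lt w x _ (by omega), snoc_lt w x _ (by omega)]
    exact hx

lemma fiber_card (k : ℕ) (p : Fin 4 → Fin 4 → Bool)
    (s : Finset (Fin (k + 3) → Fin 4))
    (hs : ∀ c, c ∈ s ↔ good c ∧ p (c ⟨k + 2, by omega⟩) (c ⟨k + 1, by omega⟩) = true) :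
    s.card = ∑ w ∈ G (k + 2),
      (Finset.univ.filter (fun z =>
        (Ok z (w ⟨k + 1, by omega⟩) (w ⟨k, by omega⟩) && p z (w ⟨k + 1, by omega⟩)) = true)).card := by
  rw [Finset.card_eq_sum_card_fiberwise (f := fun c => Fin.init c) (t := G (k + 2))
    (fun c hc => by
      simp only [G, Finset.mem_coe, Finset.mem_filter, Finset.mem_univ, true_and]
      exact good_init c ((hs c).1 hc).1)]
  apply Finset.sum_congr rfl
  intro w hw
  simp only [G, Finset.mem_filter, Finset.mem_univ, true_and] at hw
  refine Finset.card_bij' (fun c _ => c (Fin.last (k + 2))) (fun x _ => Fin.snoc w x) ?hi ?hj ?li ?ri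
  case hi =>
    intro c hc
    simp only [Finset.mem_filter] at hc
    obtain ⟨hcs, hi⟩ := hc
    obtain ⟨hg, hp⟩ := (hs c).1 hcs
    simp only [Finset.mem_filter, Finset.mem_univ, true_and]
    have hok : Ok (c (Fin.last (k + 2))) (w ⟨k + 1, by omega⟩) (w ⟨k, by omega⟩) = true := by
      rw [← hi]; exact hg k (by omega)
    have hp' : p (c (Fin.last (k + 2))) (w ⟨k + 1, by omega⟩) = true := by
      rw [← hi]; exact hp
    rw [hok, hp']
    rfl
  case hj =>
    intro x hx
    simp only [Finset.mem_filter, Finset.mem_univ, true_and, Bool.and_eq_true] at hx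
    simp only [Finset.mem_filter]
    refine ⟨(hs _).2 ⟨good_snoc w x hw hx.1, ?_⟩, by simp⟩
    rw [snoc_top, snoc_lt w x _ (by omega)]
    exact hx.2
  case li =>
    intro c hc
    simp only [Finset.mem_filter] at hc
    show Fin.snoc w (c (Fin.last (k + 2))) = c
    rw [← hc.2]
    exact Fin.snoc_init_self c
  case ri =>
    intro x hx
    simp [Fin.snoc_last]

lemma L1 : ∀ y x : Fin 4,
    (Finset.univ.filter (fun z => (Ok z y x && true) = true)).card
      = if Res y x = true then 2 else 4 := by decide

lemma L2 : ∀ y x : Fin 4,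
    (Finset.univ.filter (fun z => (Ok z y x && Res z y) = true)).card
      = if Res y x = true then 0 else 1 := by decide

def Rcnt (k : ℕ) : ℕ :=
  ((G (k + 2)).filter (fun c => Res (c ⟨k + 1, by omega⟩) (c ⟨k, by omega⟩) = true)).card

def Qcnt (k : ℕ) : ℕ :=
  ((G (k + 2)).filter (fun c => ¬ Res (c ⟨k + 1, by omega⟩) (c ⟨k, by omega⟩) = true)).card

lemma hNQ (k : ℕ) : Rcnt k + Qcnt k = Ncnt (k + 2) :=
  Finset.card_filter_add_card_filter_not _

lemma sum_ite_split (k : ℕ) (a b : ℕ) (hk1 : k + 1 < k + 2) (hk0 : k < k + 2) :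
    (∑ w ∈ G (k + 2), if Res (w ⟨k + 1, hk1⟩) (w ⟨k, hk0⟩) = true then a else b)
      = a * Rcnt k + b * Qcnt k := by
  rw [Finset.sum_ite, Finset.sum_const, Finset.sum_const, smul_eq_mul, smul_eq_mul,
    mul_comm, mul_comm (Finset.filter _ _).card b]
  rfl

lemma hN (k : ℕ) : Ncnt (k + 3) = 2 * Rcnt k + 4 * Qcnt k := by
  have hk1 : k + 1 < k + 2 := by omega
  have hk0 : k < k + 2 := by omega
  have hfc := fiber_card k (fun _ _ => true) (G (k + 3)) (by
    intro c
    simp [G, Finset.mem_filter])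
  rw [Ncnt, hfc]
  rw [Finset.sum_congr rfl (fun w _ => L1 (w ⟨k + 1, hk1⟩) (w ⟨k, hk0⟩))]
  exact sum_ite_split k 2 4 hk1 hk0

lemma hR (k : ℕ) : Rcnt (k + 1) = Qcnt k := by
  have hk1 : k + 1 < k + 2 := by omega
  have hk0 : k < k + 2 := by omega
  have hfc := fiber_card k Res
    ((G (k + 3)).filter (fun c => Res (c ⟨k + 2, by omega⟩) (c ⟨k + 1, by omega⟩) = true)) (by
    intro c
    simp only [Finset.mem_filter, G, Finset.mem_univ, true_and])
  rw [Rcnt]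
  show (Finset.filter _ (G (k + 3))).card = _
  rw [hfc]
  rw [Finset.sum_congr rfl (fun w _ => L2 (w ⟨k + 1, hk1⟩) (w ⟨k, hk0⟩))]
  rw [sum_ite_split k 0 1 hk1 hk0]
  simp

lemma Ncnt_rec : ∀ m, 1 ≤ m → Ncnt (m + 2) = 3 * Ncnt (m + 1) + 2 * Ncnt m := by
  intro m hm
  match m, hm with
  | 1, _ =>
    show Ncnt 3 = 3 * Ncnt 2 + 2 * Ncnt 1
    have h1 : Ncnt 1 = 4 := by decide
    have h2 : Ncnt 2 = 16 := by decide
    have h3 : Ncnt 3 = 56 := by decide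
    omega
  | (k + 2), _ =>
    show Ncnt (k + 4) = 3 * Ncnt (k + 3) + 2 * Ncnt (k + 2)
    have e1 : Ncnt (k + 4) = 2 * Rcnt (k + 1) + 4 * Qcnt (k + 1) := hN (k + 1)
    have e2 : Ncnt (k + 3) = 2 * Rcnt k + 4 * Qcnt k := hN k
    have e3 : Rcnt (k + 1) = Qcnt k := hR k
    have e4 : Rcnt k + Qcnt k = Ncnt (k + 2) := hNQ k
    have e5 : Rcnt (k + 1) + Qcnt (k + 1) = Ncnt (k + 3) := hNQ (k + 1)
    omega

lemma okiff : ∀ z y x : Fin 4,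
    (¬((z ∈ ({0, 1} : Set (Fin 4)) ∧ y = 3 ∧ x ∈ ({0, 1} : Set (Fin 4))) ∨
       (z ∈ ({2, 3} : Set (Fin 4)) ∧ y = 0 ∧ x ∈ ({2, 3} : Set (Fin 4))))) ↔ Ok z y x = true := by
  simp only [Set.mem_insert_iff, Set.mem_singleton_iff]
  decide

lemma NPC_eq_good (m : ℕ) : NPC m = {c | good c} := by
  ext c
  constructor
  · intro H i h
    exact (okiff _ _ _).1 (H i h)
  · intro H i h
    exact (okiff _ _ _).2 (H i h)

lemma ncard_eq (m : ℕ) : (NPC m).ncard = Ncnt m := by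
  rw [NPC_eq_good, Set.ncard_eq_toFinset_card']
  congr 1
  ext c
  simp [Set.mem_toFinset, G]

noncomputable def lam : ℝ := (3 + Real.sqrt 17) / 2

lemma s17 : Real.sqrt 17 ^ 2 = 17 := Real.sq_sqrt (by norm_num)

lemma s17_lb : 4 < Real.sqrt 17 := by nlinarith [s17, Real.sqrt_nonneg 17]

lemma s17_ub : Real.sqrt 17 < 5 := by nlinarith [s17, Real.sqrt_nonneg 17]

lemma lam_lb : 7 / 2 < lam := by unfold lam; linarith [s17_lb]

lemma lam_ub : lam < 4 := by unfold lam; linarith [s17_ub]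

lemma lam_pos : 0 < lam := by linarith [lam_lb]

lemma hlam : lam ^ 2 = 3 * lam + 2 := by
  unfold lam
  have := s17
  nlinarith [s17]

lemma bounds : ∀ m : ℕ, lam ^ (m + 1) ≤ (Ncnt (m + 1) : ℝ) ∧
    (Ncnt (m + 1) : ℝ) ≤ 2 * lam ^ (m + 1) := by
  intro m
  induction m using Nat.strong_induction_on with
  | _ m ih =>
    match m with
    | 0 =>
      have h1 : Ncnt 1 = 4 := by decide
      rw [h1]
      norm_num
      constructor <;> nlinarith [lam_lb, lam_ub]
    | 1 =>
      have h2 : Ncnt 2 = 16 := by decide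
      rw [h2]
      norm_num
      constructor <;> nlinarith [lam_lb, lam_ub, hlam]
    | (k + 2) =>
      obtain ⟨l1, u1⟩ := ih k (by omega)
      obtain ⟨l2, u2⟩ := ih (k + 1) (by omega)
      have hrec : (Ncnt (k + 3) : ℝ) = 3 * (Ncnt (k + 2) : ℝ) + 2 * (Ncnt (k + 1) : ℝ) := by
        have h := Ncnt_rec (k + 1) (by omega)
        have h' : Ncnt (k + 3) = 3 * Ncnt (k + 2) + 2 * Ncnt (k + 1) := h
        exact_mod_cast h'
      have hpow : lam ^ (k + 3) = 3 * lam ^ (k + 2) + 2 * lam ^ (k + 1) := by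
        have h1 : lam ^ (k + 3) = lam ^ (k + 1) * lam ^ 2 := by ring
        rw [h1, hlam]
        ring
      refine ⟨?_, ?_⟩
      · show lam ^ (k + 3) ≤ (Ncnt (k + 3) : ℝ)
        rw [hrec, hpow]
        linarith
      · show (Ncnt (k + 3) : ℝ) ≤ 2 * lam ^ (k + 3)
        rw [hrec, hpow]
        linarith

lemma bounds' (m : ℕ) (hm : 1 ≤ m) :
    lam ^ m ≤ (Ncnt m : ℝ) ∧ (Ncnt m : ℝ) ≤ 2 * lam ^ m := by
  match m, hm with
  | (k + 1), _ => exact bounds k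

theorem stmt19 :
    Filter.Tendsto (fun m : ℕ => ((NPC m).ncard : ℝ) ^ (1 / (m : ℝ)))
      Filter.atTop (nhds ((3 + Real.sqrt 17) / 2)) := by
  have key : ∀ m : ℕ, 1 ≤ m →
      lam ≤ ((NPC m).ncard : ℝ) ^ (1 / (m : ℝ)) ∧
      ((NPC m).ncard : ℝ) ^ (1 / (m : ℝ)) ≤ (2 : ℝ) ^ (1 / (m : ℝ)) * lam := by
    intro m hm
    have hm0 : (m : ℝ) ≠ 0 := Nat.cast_ne_zero.2 (by omega)
    have hinv : 0 ≤ 1 / (m : ℝ) := by positivity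
    obtain ⟨hl, hu⟩ := bounds' m hm
    rw [ncard_eq]
    have hlpow : (lam ^ m) ^ (1 / (m : ℝ)) = lam := by
      rw [← Real.rpow_natCast lam m, ← Real.rpow_mul lam_pos.le]
      rw [mul_one_div_cancel hm0, Real.rpow_one]
    constructor
    · calc lam = (lam ^ m) ^ (1 / (m : ℝ)) := hlpow.symm
        _ ≤ (Ncnt m : ℝ) ^ (1 / (m : ℝ)) :=
          Real.rpow_le_rpow (pow_nonneg lam_pos.le m) hl hinv
    · calc (Ncnt m : ℝ) ^ (1 / (m : ℝ)) ≤ (2 * lam ^ m) ^ (1 / (m : ℝ)) :=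
          Real.rpow_le_rpow (Nat.cast_nonneg _) hu hinv
        _ = (2 : ℝ) ^ (1 / (m : ℝ)) * lam := by
          rw [Real.mul_rpow (by norm_num) (pow_nonneg lam_pos.le m), hlpow]
  have h2 : Filter.Tendsto (fun m : ℕ => (2 : ℝ) ^ (1 / (m : ℝ)) * lam)
      Filter.atTop (nhds lam) := by
    have hinv : Filter.Tendsto (fun m : ℕ => 1 / (m : ℝ)) Filter.atTop (nhds 0) :=
      tendsto_one_div_atTop_nhds_zero_nat
    have h2' : Filter.Tendsto (fun m : ℕ => (2 : ℝ) ^ (1 / (m : ℝ)))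
        Filter.atTop (nhds 1) := by
      have := (Filter.Tendsto.rpow (tendsto_const_nhds (x := (2:ℝ))) hinv
        (Or.inl (by norm_num)))
      simpa using this
    have := h2'.mul_const lam
    simpa using this
  have hconst : Filter.Tendsto (fun _ : ℕ => lam) Filter.atTop (nhds lam) :=
    tendsto_const_nhds
  have : Filter.Tendsto (fun m : ℕ => ((NPC m).ncard : ℝ) ^ (1 / (m : ℝ)))
      Filter.atTop (nhds lam) := by
    apply tendsto_of_tendsto_of_tendsto_of_le_of_le' hconst h2
    · filter_upwards [Filter.eventually_ge_atTop 1] with m hm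
      exact (key m hm).1
    · filter_upwards [Filter.eventually_ge_atTop 1] with m hm
      exact (key m hm).2
  exact this
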